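/- The corona product G ∘ H of two nontrivial graphs G, H is quasi-λ-distance-balanced if and only if G and H are both empty graphs; in that case λ = |V(H)|. -/

import Mathlib

open SimpleGraph

/-- `wSet G u v` is the set of vertices strictly closer to `u` than to `v`. -/
def wSet {V : Type*} (G : SimpleGraph V) (u v : V) : Set V :=
  {x | G.dist x u < G.dist x v}

/-- `G` is quasi-`lam`-distance-balanced. -/
def QuasiDB {V : Type*} (G : SimpleGraph V) (lam : ℚ) : Prop :=
  ∀ u v : V, G.Adj u v →
    ((wSet G u v).ncard : ℚ) = lam * ((wSet G v u).ncard : ℚ) ∨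
    ((wSet G v u).ncard : ℚ) = lam * ((wSet G u v).ncard : ℚ)


/-- The corona product `G ∘ H`: one copy of `G` together with a copy `H_i` of
`H` for each vertex `i` of `G`, joining the vertex `i` of `G` to every vertex
of `H_i`. -/
def corona {α β : Type*} (G : SimpleGraph α) (H : SimpleGraph β) :
    SimpleGraph (α ⊕ α × β) where
  Adj x y :=
    match x, y with
    | .inl u, .inl v => G.Adj u v
    | .inl u, .inr p => u = p.1
    | .inr p, .inl u => u = p.1
    | .inr p, .inr q => p.1 = q.1 ∧ H.Adj p.2 q.2
  symm := by
    constructor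
    intro x y h
    cases x <;> cases y <;> simp_all [SimpleGraph.adj_comm, eq_comm]
  loopless := by
    constructor
    intro x
    cases x <;> simp

namespace CoronaAux

variable {α β : Type*} (G : SimpleGraph α) (H : SimpleGraph β)

@[simp] lemma adj_inl_inl {u v : α} : (corona G H).Adj (.inl u) (.inl v) ↔ G.Adj u v := Iff.rfl
@[simp] lemma adj_inl_inr {u : α} {p : α × β} : (corona G H).Adj (.inl u) (.inr p) ↔ u = p.1 := Iff.rfl
@[simp] lemma adj_inr_inl {u : α} {p : α × β} : (corona G H).Adj (.inr p) (.inl u) ↔ u = p.1 := Iff.rfl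
@[simp] lemma adj_inr_inr {p q : α × β} : (corona G H).Adj (.inr p) (.inr q) ↔ p.1 = q.1 ∧ H.Adj p.2 q.2 := Iff.rfl

/-- projection to the `G` part -/
def pi : α ⊕ α × β → α := Sum.elim id Prod.fst

@[simp] lemma pi_inl (a : α) : pi (Sum.inl a : α ⊕ α × β) = a := rfl
@[simp] lemma pi_inr (p : α × β) : pi (Sum.inr p : α ⊕ α × β) = p.1 := rfl

variable {G H}

lemma exists_walk_pi {x y : α ⊕ α × β} (w : (corona G H).Walk x y) :
    ∃ w' : G.Walk (pi x) (pi y), w'.length ≤ w.length := by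
  induction w with
  | nil => exact ⟨.nil, by simp⟩
  | @cons u v z h p ih =>
    obtain ⟨w', hw'⟩ := ih
    match u, v, h with
    | .inl a, .inl b, h => exact ⟨.cons h w', Nat.succ_le_succ hw'⟩
    | .inl a, .inr q, h => exact ⟨w'.copy (show a = q.1 from h).symm rfl, by exact (Walk.length_copy _ _ _).le.trans (hw'.trans (Nat.le_succ _))⟩
    | .inr q, .inl a, h => exact ⟨w'.copy (show a = q.1 from h) rfl, by exact (Walk.length_copy _ _ _).le.trans (hw'.trans (Nat.le_succ _))⟩
    | .inr q, .inr r, h => exact ⟨w'.copy (show q.1 = r.1 from h.1).symm rfl, by exact (Walk.length_copy _ _ _).le.trans (hw'.trans (Nat.le_succ _))⟩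

lemma reachable_pi {x y : α ⊕ α × β} (h : (corona G H).Reachable x y) :
    G.Reachable (pi x) (pi y) := by
  obtain ⟨w⟩ := h
  obtain ⟨w', -⟩ := exists_walk_pi w
  exact ⟨w'⟩

/-- The embedding `inl : G → corona G H` as a graph hom. -/
def inlHom : G →g corona G H := ⟨Sum.inl, fun h => h⟩

lemma reachable_inl_inl {u v : α} :
    (corona G H).Reachable (.inl u) (.inl v) ↔ G.Reachable u v := by
  constructor
  · intro h; simpa using reachable_pi h
  · intro ⟨w⟩; exact ⟨w.map inlHom⟩

lemma reachable_inr_inl {p : α × β} {a : α} :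
    (corona G H).Reachable (.inr p) (.inl a) ↔ G.Reachable p.1 a := by
  constructor
  · intro h; simpa using reachable_pi h
  · intro h
    refine (Reachable.symm ?_).trans (reachable_inl_inl.2 h)
    exact SimpleGraph.Adj.reachable (by simp)

lemma dist_inl_inl (u v : α) :
    (corona G H).dist (.inl u) (.inl v) = G.dist u v := by
  by_cases h : G.Reachable u v
  · refine le_antisymm ?_ ?_
    · obtain ⟨w, hw⟩ := h.exists_walk_length_eq_dist
      calc (corona G H).dist (.inl u) (.inl v) ≤ (w.map inlHom).length := dist_le _
        _ = G.dist u v := by simpa using hw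
    · obtain ⟨w, hw⟩ := (reachable_inl_inl.2 h).exists_walk_length_eq_dist
      obtain ⟨w', hw'⟩ := exists_walk_pi w
      calc G.dist u v ≤ w'.length := dist_le _
        _ ≤ w.length := hw'
        _ = _ := hw
  · rw [dist_eq_zero_of_not_reachable h,
      dist_eq_zero_of_not_reachable (fun hr => h (reachable_inl_inl.1 hr))]

end CoronaAux

namespace CoronaAux
variable {α β : Type*} {G : SimpleGraph α} {H : SimpleGraph β}

lemma walk_inr_inl_le :
    ∀ {x z : α ⊕ α × β} (w : (corona G H).Walk x z) (p : α × β) (a : α),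
      x = .inr p → z = .inl a → G.dist p.1 a + 1 ≤ w.length := by
  intro x z w
  induction w with
  | nil => intro p a hp hz; rw [hz] at hp; simp at hp
  | @cons u v z h w ih =>
    intro p a hp hz
    subst hp; subst hz
    match v, h with
    | .inl c, h =>
      have h1 : (corona G H).dist (.inl c) (.inl a) ≤ w.length := dist_le _
      rw [dist_inl_inl] at h1
      have : c = p.1 := h
      subst this
      simpa using Nat.succ_le_succ h1
    | .inr q, h =>
      have h1 := ih q a rfl rfl
      have : p.1 = q.1 := h.1
      rw [this]
      simpa using h1.trans (Nat.le_succ _)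

lemma dist_inr_inl {c a : α} {b : β} (h : G.Reachable c a) :
    (corona G H).dist (.inr (c, b)) (.inl a) = G.dist c a + 1 := by
  refine le_antisymm ?_ ?_
  · obtain ⟨w, hw⟩ := h.exists_walk_length_eq_dist
    have : (corona G H).dist (.inr (c,b)) (.inl a) ≤ (Walk.cons (by simp : (corona G H).Adj (.inr (c,b)) (.inl c)) (w.map inlHom)).length := dist_le _
    exact this.trans (le_of_eq (congrArg (· + 1) ((Walk.length_map _ _).trans hw)))
  · have hr : (corona G H).Reachable (.inr (c,b)) (.inl a) := reachable_inr_inl.2 h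
    obtain ⟨w, hw⟩ := hr.exists_walk_length_eq_dist
    rw [← hw]
    exact walk_inr_inl_le w (c,b) a rfl rfl

lemma walk_from_copy {a : α} {x : α ⊕ α × β} (hx : ∀ p : α × β, p.1 = a → x ≠ .inr p) :
    ∀ {y} (w : (corona G H).Walk y x) (b : β), y = .inr (a, b) →
      (corona G H).dist (.inl a) x + 1 ≤ w.length := by
  intro y w
  induction w with
  | nil => intro b hb; exact absurd hb (hx (a, b) rfl)
  | @cons u v z h w ih =>
    intro b hb
    subst hb
    match v, h with
    | .inl c, h =>
      have : c = a := h
      subst this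
      simpa using Nat.succ_le_succ (dist_le w)
    | .inr q, h =>
      have hq : q = (a, q.2) := by
        have : a = q.1 := h.1
        rw [Prod.ext_iff]; simp [this]
      have h1 := ih hx q.2 (by rw [← hq])
      simpa using h1.trans (Nat.le_succ _)

lemma dist_to_inr {a : α} {x : α ⊕ α × β} (hx : ∀ b' : β, x ≠ .inr (a, b'))
    (hr : (corona G H).Reachable x (.inl a)) (b : β) :
    (corona G H).dist x (.inr (a, b)) = (corona G H).dist x (.inl a) + 1 := by
  refine le_antisymm ?_ ?_
  · obtain ⟨w, hw⟩ := hr.exists_walk_length_eq_dist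
    have : (corona G H).dist x (.inr (a,b)) ≤ (w.concat (by simp : (corona G H).Adj (.inl a) (.inr (a,b)))).length := dist_le _
    simpa [Walk.length_concat, hw] using this
  · have hr2 : (corona G H).Reachable (.inr (a,b)) x :=
      ((SimpleGraph.Adj.reachable (by simp : (corona G H).Adj (.inl a) (.inr (a,b)))).symm.trans hr.symm)
    obtain ⟨w, hw⟩ := hr2.exists_walk_length_eq_dist
    have hx' : ∀ p : α × β, p.1 = a → x ≠ .inr p := by
      intro p hp
      have : p = (a, p.2) := by rw [Prod.ext_iff]; simp [hp]
      rw [this]; exact hx p.2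
    have h2 := walk_from_copy hx' w b rfl
    rw [hw] at h2
    have e1 : (corona G H).dist x (.inr (a,b)) = (corona G H).dist (.inr (a,b)) x :=
      SimpleGraph.dist_comm
    have e2 : (corona G H).dist x (.inl a) = (corona G H).dist (.inl a) x :=
      SimpleGraph.dist_comm
    rw [e1, e2]
    exact h2

lemma dist_inl_inr {a : α} (b : β) :
    (corona G H).dist (.inl a) (.inr (a, b)) = 1 :=
  dist_eq_one_iff_adj.2 (by simp)

lemma dist_inr_inr {a : α} {b b' : β} (hne : b' ≠ b) (hadj : ¬H.Adj b' b) :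
    (corona G H).dist (.inr (a, b')) (.inr (a, b)) = 2 := by
  have hle : (corona G H).dist (.inr (a,b')) (.inr (a,b)) ≤ 2 := by
    have := dist_le (Walk.cons (by simp : (corona G H).Adj (.inr (a,b')) (.inl a))
      (Walk.cons (by simp : (corona G H).Adj (.inl a) (.inr (a,b))) Walk.nil))
    simpa using this
  have hne0 : (corona G H).dist (.inr (a,b')) (.inr (a,b)) ≠ 0 := by
    rw [dist_ne_zero_iff_ne_and_reachable]
    refine ⟨by simp [hne], ?_⟩
    exact (SimpleGraph.Adj.reachable (by simp : (corona G H).Adj (.inr (a,b')) (.inl a))).trans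
      (SimpleGraph.Adj.reachable (by simp : (corona G H).Adj (.inl a) (.inr (a,b))))
  have hne1 : (corona G H).dist (.inr (a,b')) (.inr (a,b)) ≠ 1 := by
    intro hcon
    have := dist_eq_one_iff_adj.1 hcon
    simp only [adj_inr_inr] at this
    exact hadj this.2
  omega

end CoronaAux

namespace CoronaAux
open Set
variable {α β : Type*} {G : SimpleGraph α} {H : SimpleGraph β}

/-- For the pendant edge `inl a — inr (a,b)`, the set of vertices closer to the
pendant vertex is just the pendant vertex itself. -/
lemma wSet_inr_inl_eq (a : α) (b : β) :
    wSet (corona G H) (.inr (a,b)) (.inl a) = {Sum.inr (a,b)} := by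
  ext x
  simp only [wSet, Set.mem_setOf_eq, Set.mem_singleton_iff]
  constructor
  · intro hlt
    by_contra hne
    have hrxu : (corona G H).Reachable x (.inl a) :=
      Reachable.of_dist_ne_zero (by omega)
    have hrxv : (corona G H).Reachable x (.inr (a,b)) :=
      hrxu.trans (SimpleGraph.Adj.reachable (by simp))
    have hL0 : (corona G H).dist x (.inr (a,b)) ≠ 0 := by
      intro h0
      exact hne (hrxv.dist_eq_zero_iff.mp h0)
    obtain ⟨w, hw⟩ := hrxv.symm.exists_walk_length_eq_dist
    have hwx : w.length = (corona G H).dist x (.inr (a,b)) := by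
      rw [hw]; exact SimpleGraph.dist_comm
    cases w with
    | nil => exact hne rfl
    | @cons u v z h p =>
      match v, h with
      | .inl c, h =>
        have hc : c = a := h
        have h0 : (corona G H).dist (.inl c) x ≤ p.length := dist_le p
        have h1 : (corona G H).dist (.inl a) x ≤ p.length := by rw [← hc]; exact h0
        have h2 : (corona G H).dist x (.inl a) = (corona G H).dist (.inl a) x :=
          SimpleGraph.dist_comm
        simp only [Walk.length_cons] at hwx
        omega
      | .inr q, h =>
        have hq : (corona G H).Adj (.inl a) (.inr q) := by
          simp only [adj_inr_inr] at h
          simpa using h.1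
        have h1 : (corona G H).dist (.inl a) x ≤ (Walk.cons hq p).length := dist_le _
        have h2 : (corona G H).dist x (.inl a) = (corona G H).dist (.inl a) x :=
          SimpleGraph.dist_comm
        simp only [Walk.length_cons] at hwx h1
        omega
  · rintro rfl
    rw [SimpleGraph.dist_self]
    have : (corona G H).dist (.inr (a,b)) (.inl a) = 1 :=
      dist_eq_one_iff_adj.2 (by simp)
    omega

lemma mem_wSet_star {a : α} {x : α ⊕ α × β} (hx : ∀ b' : β, x ≠ .inr (a, b'))
    (hr : (corona G H).Reachable x (.inl a)) (b : β) :
    x ∈ wSet (corona G H) (.inl a) (.inr (a,b)) := by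
  simp only [wSet, Set.mem_setOf_eq]
  rw [dist_to_inr hx hr b]
  omega

lemma wSet_inl_inl_eq {a1 a2 : α} (hadj : G.Adj a1 a2) :
    wSet (corona G H) (.inl a1) (.inl a2) = pi ⁻¹' (wSet G a1 a2) := by
  ext x
  match x with
  | .inl c => simp [wSet, dist_inl_inl]
  | .inr (c, b') =>
    by_cases hr : G.Reachable c a1
    · have hr2 : G.Reachable c a2 := hr.trans hadj.reachable
      simp only [wSet, Set.mem_setOf_eq, Set.mem_preimage, pi_inr]
      rw [dist_inr_inl hr, dist_inr_inl hr2]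
      omega
    · have hr2 : ¬G.Reachable c a2 := fun h => hr (h.trans hadj.symm.reachable)
      simp only [wSet, Set.mem_setOf_eq, Set.mem_preimage, pi_inr]
      rw [dist_eq_zero_of_not_reachable (fun h => hr (by simpa using reachable_pi h)),
        dist_eq_zero_of_not_reachable (fun h => hr2 (by simpa using reachable_pi h)),
        dist_eq_zero_of_not_reachable hr, dist_eq_zero_of_not_reachable hr2]

/-- counting fibers of `pi` -/
lemma ncard_preimage_pi [Fintype α] [Fintype β] (S : Set α) :
    (pi (β := β) ⁻¹' S).ncard = S.ncard * (Fintype.card β + 1) := by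
  classical
  have e : (pi (β := β) ⁻¹' S) ≃ S × Option β :=
    { toFun := fun x => match x with
        | ⟨.inl a, ha⟩ => (⟨a, ha⟩, none)
        | ⟨.inr (a,b), ha⟩ => (⟨a, ha⟩, some b)
      invFun := fun x => match x with
        | (⟨a, ha⟩, none) => ⟨.inl a, ha⟩
        | (⟨a, ha⟩, some b) => ⟨.inr (a,b), ha⟩
      left_inv := by rintro ⟨(a | ⟨a, b⟩), ha⟩ <;> rfl
      right_inv := by rintro ⟨⟨a, ha⟩, (_ | b)⟩ <;> rfl }
  rw [← Nat.card_coe_set_eq, Nat.card_congr e, Nat.card_prod,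
    Nat.card_coe_set_eq, Finite.card_option, Nat.card_eq_fintype_card]

end CoronaAux

namespace CoronaAux
open Set
variable {α β : Type*} [Fintype α] [Fintype β] {G : SimpleGraph α} {H : SimpleGraph β} {lam : ℚ}

lemma lam_eq_star (hlam : 1 < lam) (hq : QuasiDB (corona G H) lam) (a : α) (b : β) :
    lam = ((wSet (corona G H) (.inl a) (.inr (a,b))).ncard : ℚ) := by
  have hadj : (corona G H).Adj (.inl a) (.inr (a,b)) := by simp
  have h1 : (wSet (corona G H) (.inr (a,b)) (.inl a)).ncard = 1 := by
    rw [wSet_inr_inl_eq]; exact Set.ncard_singleton _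
  have hmem : (Sum.inl a : α ⊕ α × β) ∈ wSet (corona G H) (.inl a) (.inr (a,b)) :=
    mem_wSet_star (by simp) (Reachable.refl _) b
  have hpos : 0 < (wSet (corona G H) (.inl a) (.inr (a,b))).ncard :=
    (Set.ncard_pos (Set.toFinite _)).2 ⟨_, hmem⟩
  rcases hq _ _ hadj with h | h
  · rw [h1] at h; push_cast at h; linarith
  · rw [h1] at h
    exfalso
    have h2 : (1 : ℚ) ≤ ((wSet (corona G H) (.inl a) (.inr (a,b))).ncard : ℚ) := by
      exact_mod_cast hpos
    have h3 : lam * 1 ≤ lam * ((wSet (corona G H) (.inl a) (.inr (a,b))).ncard : ℚ) :=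
      mul_le_mul_of_nonneg_left h2 (by linarith)
    rw [mul_one] at h3
    push_cast at h
    linarith

/-- If `G` has an edge, we get a contradiction. -/
lemma no_G_edge [Nonempty β] (hlam : 1 < lam) (hq : QuasiDB (corona G H) lam)
    {a1 a2 : α} (hadj : G.Adj a1 a2) : False := by
  classical
  set C := corona G H with hC
  obtain ⟨b0⟩ := ‹Nonempty β›
  set comp : Set α := {c | G.Reachable a1 c} with hcomp
  set R := comp.ncard with hR
  -- lower bound on the star count
  have hsub : insert (Sum.inr (a2, b0)) (Sum.inl '' comp) ⊆
      wSet C (.inl a1) (.inr (a1, b0)) := by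
    intro x hx
    rcases hx with rfl | ⟨c, hc, rfl⟩
    · exact mem_wSet_star (fun b' h => by simp [hadj.ne'] at h)
        (reachable_inr_inl.2 (hadj.symm.reachable.trans (Reachable.refl _))) b0
    · exact mem_wSet_star (by simp) (reachable_inl_inl.2 hc.symm) b0
  have hcard_sub : R + 1 ≤ (wSet C (.inl a1) (.inr (a1, b0))).ncard := by
    have h1 : (insert (Sum.inr (a2, b0)) (Sum.inl '' comp)).ncard = R + 1 := by
      rw [Set.ncard_insert_of_notMem (by simp) (Set.toFinite _),
        Set.ncard_image_of_injective _ Sum.inl_injective]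
    rw [← h1]
    exact Set.ncard_le_ncard hsub (Set.toFinite _)
  -- lam = star count
  have hlam_eq := lam_eq_star hlam hq a1 b0
  -- the G-edge W-sets
  have hW1 : (wSet C (.inl a1) (.inl a2)).ncard = (wSet G a1 a2).ncard * (Fintype.card β + 1) := by
    rw [hC, wSet_inl_inl_eq hadj, ncard_preimage_pi]
  have hW2 : (wSet C (.inl a2) (.inl a1)).ncard = (wSet G a2 a1).ncard * (Fintype.card β + 1) := by
    rw [hC, wSet_inl_inl_eq hadj.symm, ncard_preimage_pi]
  -- both G-level sets are inside comp minus a vertex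
  have hA1 : wSet G a1 a2 ⊆ comp \ {a2} := by
    intro c hc
    simp only [wSet, Set.mem_setOf_eq] at hc
    have hr : G.Reachable c a2 := Reachable.of_dist_ne_zero (by omega)
    refine ⟨(hr.trans hadj.symm.reachable).symm, ?_⟩
    intro hc2
    rw [Set.mem_singleton_iff] at hc2
    subst hc2
    rw [SimpleGraph.dist_self] at hc
    omega
  have hA2 : wSet G a2 a1 ⊆ comp \ {a1} := by
    intro c hc
    simp only [wSet, Set.mem_setOf_eq] at hc
    have hr : G.Reachable c a1 := Reachable.of_dist_ne_zero (by omega)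
    refine ⟨hr.symm, ?_⟩
    intro hc2
    rw [Set.mem_singleton_iff] at hc2
    subst hc2
    rw [SimpleGraph.dist_self] at hc
    omega
  have ha2comp : a2 ∈ comp := hadj.reachable
  have ha1comp : a1 ∈ comp := Reachable.refl _
  have hw1le : (wSet G a1 a2).ncard ≤ R - 1 := by
    calc (wSet G a1 a2).ncard ≤ (comp \ {a2}).ncard := Set.ncard_le_ncard hA1 (Set.toFinite _)
      _ = R - 1 := by rw [Set.ncard_diff_singleton_of_mem ha2comp]
  have hw2le : (wSet G a2 a1).ncard ≤ R - 1 := by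
    calc (wSet G a2 a1).ncard ≤ (comp \ {a1}).ncard := Set.ncard_le_ncard hA2 (Set.toFinite _)
      _ = R - 1 := by rw [Set.ncard_diff_singleton_of_mem ha1comp]
  have hw1pos : 0 < (wSet G a1 a2).ncard := by
    refine (Set.ncard_pos (Set.toFinite _)).2 ⟨a1, ?_⟩
    simp only [wSet, Set.mem_setOf_eq, SimpleGraph.dist_self]
    exact Reachable.pos_dist_of_ne hadj.reachable hadj.ne
  have hw2pos : 0 < (wSet G a2 a1).ncard := by
    refine (Set.ncard_pos (Set.toFinite _)).2 ⟨a2, ?_⟩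
    simp only [wSet, Set.mem_setOf_eq, SimpleGraph.dist_self]
    exact Reachable.pos_dist_of_ne hadj.symm.reachable hadj.ne'
  -- QuasiDB on the G-edge
  have hRpos : 1 ≤ R := (Set.ncard_pos (Set.toFinite _)).2 ⟨a1, ha1comp⟩
  have hlam_big : (R : ℚ) + 1 ≤ lam := by
    rw [hlam_eq]
    exact_mod_cast hcard_sub
  have key : lam ≤ (R : ℚ) - 1 := by
    rcases hq _ _ (by exact hadj : C.Adj (.inl a1) (.inl a2)) with h | h
    · rw [hW1, hW2] at h
      push_cast at h
      have hcancel : ((wSet G a1 a2).ncard : ℚ) = lam * ((wSet G a2 a1).ncard : ℚ) := by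
        have hk : ((Fintype.card β : ℚ) + 1) ≠ 0 := by positivity
        refine mul_right_cancel₀ hk ?_
        linear_combination h
      have h2 : (1:ℚ) ≤ ((wSet G a2 a1).ncard : ℚ) := by exact_mod_cast hw2pos
      have h3 : ((wSet G a1 a2).ncard : ℚ) ≤ (R:ℚ) - 1 := by
        have := hw1le
        have : ((wSet G a1 a2).ncard : ℚ) ≤ ((R - 1 : ℕ) : ℚ) := by exact_mod_cast this
        calc ((wSet G a1 a2).ncard : ℚ) ≤ ((R - 1 : ℕ) : ℚ) := this
          _ ≤ (R:ℚ) - 1 := by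
            have : (1:ℕ) ≤ R := hRpos
            push_cast [Nat.cast_sub this]
            linarith
      nlinarith
    · rw [hW1, hW2] at h
      push_cast at h
      have hcancel : ((wSet G a2 a1).ncard : ℚ) = lam * ((wSet G a1 a2).ncard : ℚ) := by
        have hk : ((Fintype.card β : ℚ) + 1) ≠ 0 := by positivity
        refine mul_right_cancel₀ hk ?_
        linear_combination h
      have h2 : (1:ℚ) ≤ ((wSet G a1 a2).ncard : ℚ) := by exact_mod_cast hw1pos
      have h3 : ((wSet G a2 a1).ncard : ℚ) ≤ (R:ℚ) - 1 := by
        have := hw2le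
        have : ((wSet G a2 a1).ncard : ℚ) ≤ ((R - 1 : ℕ) : ℚ) := by exact_mod_cast this
        calc ((wSet G a2 a1).ncard : ℚ) ≤ ((R - 1 : ℕ) : ℚ) := this
          _ ≤ (R:ℚ) - 1 := by
            have : (1:ℕ) ≤ R := hRpos
            push_cast [Nat.cast_sub this]
            linarith
      nlinarith
  linarith

end CoronaAux

namespace CoronaAux
open Set
variable {α β : Type*} [Fintype α] [Fintype β] {H : SimpleGraph β} {lam : ℚ}

lemma not_reachable_bot_ne {x y : α ⊕ α × β} (h : pi x ≠ pi y) :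
    ¬(corona (⊥ : SimpleGraph α) H).Reachable x y := by
  intro hr
  exact h ((reachable_bot).1 (reachable_pi hr))

lemma wSet_star_bot (a : α) (b : β) :
    wSet (corona (⊥ : SimpleGraph α) H) (.inl a) (.inr (a,b)) =
      insert (Sum.inl a)
        ((fun b' => (Sum.inr (a, b') : α ⊕ α × β)) '' {b' | b' ≠ b ∧ ¬H.Adj b' b}) := by
  classical
  ext x
  match x with
  | .inl c =>
    by_cases hc : c = a
    · subst hc
      simp only [wSet, Set.mem_setOf_eq, Set.mem_insert_iff, Set.mem_image]
      rw [SimpleGraph.dist_self, dist_inl_inr]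
      simp
    · simp only [wSet, Set.mem_setOf_eq, Set.mem_insert_iff, Set.mem_image]
      rw [dist_eq_zero_of_not_reachable (not_reachable_bot_ne (by simpa using hc)),
        dist_eq_zero_of_not_reachable (not_reachable_bot_ne (by simpa using hc))]
      simp [hc]
  | .inr (c, b') =>
    by_cases hc : c = a
    · subst hc
      have hd1 : (corona (⊥ : SimpleGraph α) H).dist (.inr (c, b')) (.inl c) = 1 := by
        rw [dist_inr_inl (Reachable.refl c), SimpleGraph.dist_self]
      by_cases hb : b' = b
      · subst hb
        simp only [wSet, Set.mem_setOf_eq, Set.mem_insert_iff, Set.mem_image]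
        rw [hd1, SimpleGraph.dist_self]
        simp
      · by_cases hba : H.Adj b' b
        · have hd2 : (corona (⊥ : SimpleGraph α) H).dist (.inr (c, b')) (.inr (c,b)) = 1 :=
            dist_eq_one_iff_adj.2 (by simp [hba])
          simp only [wSet, Set.mem_setOf_eq, Set.mem_insert_iff, Set.mem_image]
          rw [hd1, hd2]
          simp [hba]
        · have hd2 : (corona (⊥ : SimpleGraph α) H).dist (.inr (c, b')) (.inr (c,b)) = 2 :=
            dist_inr_inr hb hba
          simp only [wSet, Set.mem_setOf_eq, Set.mem_insert_iff, Set.mem_image]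
          rw [hd1, hd2]
          simp [hb, hba]
    · simp only [wSet, Set.mem_setOf_eq, Set.mem_insert_iff, Set.mem_image]
      rw [dist_eq_zero_of_not_reachable (not_reachable_bot_ne (by simpa using hc)),
        dist_eq_zero_of_not_reachable (not_reachable_bot_ne (by simpa using hc))]
      simp [hc, Ne.symm hc]

lemma star_count_bot (a : α) (b : β) :
    (wSet (corona (⊥ : SimpleGraph α) H) (.inl a) (.inr (a,b))).ncard
      + (H.neighborSet b).ncard = Fintype.card β := by
  classical
  set S : Set β := {b' | b' ≠ b ∧ ¬H.Adj b' b} with hS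
  have hinj : Function.Injective (fun b' => (Sum.inr (a, b') : α ⊕ α × β)) := by
    intro x y h; simpa using h
  have h1 : (wSet (corona (⊥ : SimpleGraph α) H) (.inl a) (.inr (a,b))).ncard
      = S.ncard + 1 := by
    rw [wSet_star_bot, Set.ncard_insert_of_notMem (by simp) (Set.toFinite _),
      Set.ncard_image_of_injective _ hinj]
  have h2 : Sᶜ = insert b (H.neighborSet b) := by
    ext b'
    simp only [hS, Set.mem_compl_iff, Set.mem_setOf_eq, Set.mem_insert_iff,
      SimpleGraph.mem_neighborSet, not_and_or, not_not]
    rw [H.adj_comm]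
  have h3 : S.ncard + Sᶜ.ncard = Fintype.card β := by
    rw [Set.ncard_add_ncard_compl S (Set.toFinite _) (Set.toFinite _), Nat.card_eq_fintype_card]
  have h4 : Sᶜ.ncard = (H.neighborSet b).ncard + 1 := by
    rw [h2, Set.ncard_insert_of_notMem (by simp) (Set.toFinite _)]
  omega

end CoronaAux

namespace CoronaAux
open Set
variable {α β : Type*} [Fintype α] [Fintype β] {H : SimpleGraph β} {lam : ℚ}

lemma wSet_H_edge (a : α) {b1 b2 : β} (hadj : H.Adj b1 b2) :
    wSet (corona (⊥ : SimpleGraph α) H) (.inr (a,b1)) (.inr (a,b2)) =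
      (fun b' => (Sum.inr (a, b') : α ⊕ α × β)) ''
        {b' | b' = b1 ∨ (H.Adj b' b1 ∧ ¬H.Adj b' b2 ∧ b' ≠ b2)} := by
  classical
  have hd : ∀ (b b' : β), (corona (⊥ : SimpleGraph α) H).dist (.inr (a, b')) (.inr (a,b)) =
      if b' = b then 0 else if H.Adj b' b then 1 else 2 := by
    intro b b'
    by_cases h1 : b' = b
    · subst h1; simp [SimpleGraph.dist_self]
    · by_cases h2 : H.Adj b' b
      · rw [if_neg h1, if_pos h2]
        exact dist_eq_one_iff_adj.2 (by simp [h2])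
      · rw [if_neg h1, if_neg h2]
        exact dist_inr_inr h1 h2
  ext x
  match x with
  | .inl c =>
    by_cases hc : c = a
    · subst hc
      simp only [wSet, Set.mem_setOf_eq, Set.mem_image]
      rw [dist_inl_inr, dist_inl_inr]
      simp
    · simp only [wSet, Set.mem_setOf_eq, Set.mem_image]
      rw [dist_eq_zero_of_not_reachable (not_reachable_bot_ne (by simpa using hc)),
        dist_eq_zero_of_not_reachable (not_reachable_bot_ne (by simpa using hc))]
      simp
  | .inr (c, b') =>
    by_cases hc : c = a
    · subst hc
      simp only [wSet, Set.mem_setOf_eq, Set.mem_image]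
      rw [hd b1 b', hd b2 b']
      constructor
      · intro hlt
        refine ⟨b', ?_, rfl⟩
        by_cases e1 : b' = b1
        · exact Or.inl e1
        · rw [if_neg e1] at hlt
          by_cases e2 : b' = b2
          · exfalso; rw [if_pos e2] at hlt; omega
          · rw [if_neg e2] at hlt
            by_cases f1 : H.Adj b' b1
            · rw [if_pos f1] at hlt
              by_cases f2 : H.Adj b' b2
              · rw [if_pos f2] at hlt; omega
              · exact Or.inr ⟨f1, f2, e2⟩
            · exfalso
              rw [if_neg f1] at hlt
              split at hlt <;> omega
      · rintro ⟨y, hy, hxy⟩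
        have hy' : y = b' := by simpa using hxy
        subst hy'
        rcases hy with rfl | ⟨f1, f2, e2⟩
        · rw [if_pos rfl, if_neg hadj.ne, if_pos hadj]
          omega
        · rw [if_neg f1.ne, if_pos f1, if_neg e2, if_neg f2]
          omega
    · simp only [wSet, Set.mem_setOf_eq, Set.mem_image]
      rw [dist_eq_zero_of_not_reachable (not_reachable_bot_ne (by simpa using hc)),
        dist_eq_zero_of_not_reachable (not_reachable_bot_ne (by simpa using hc))]
      simp [Ne.symm hc]

end CoronaAux

namespace CoronaAux
open Set
variable {α β : Type*} [Fintype α] [Fintype β] {H : SimpleGraph β} {lam : ℚ}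

lemma ncard_T_eq {b1 b2 : β} (hadj : H.Adj b1 b2)
    (hdeg : (H.neighborSet b1).ncard = (H.neighborSet b2).ncard) :
    {b' | b' = b1 ∨ (H.Adj b' b1 ∧ ¬H.Adj b' b2 ∧ b' ≠ b2)}.ncard =
      {b' | b' = b2 ∨ (H.Adj b' b2 ∧ ¬H.Adj b' b1 ∧ b' ≠ b1)}.ncard := by
  classical
  set N1 : Set β := {b' | H.Adj b' b1} with hN1
  set N2 : Set β := {b' | H.Adj b' b2} with hN2
  have hN1card : N1.ncard = (H.neighborSet b1).ncard := by
    congr 1; ext b'; exact H.adj_comm b' b1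
  have hN2card : N2.ncard = (H.neighborSet b2).ncard := by
    congr 1; ext b'; exact H.adj_comm b' b2
  have key : ∀ (c1 c2 : β), H.Adj c1 c2 →
      {b' | b' = c1 ∨ (H.Adj b' c1 ∧ ¬H.Adj b' c2 ∧ b' ≠ c2)}.ncard =
        {b' | H.Adj b' c1}.ncard - (({b' | H.Adj b' c1} ∩ {b' | H.Adj b' c2}).ncard + 1) + 1 := by
    intro c1 c2 hc
    set M1 : Set β := {b' | H.Adj b' c1}
    set M2 : Set β := {b' | H.Adj b' c2}
    have hU : {b' | b' = c1 ∨ (H.Adj b' c1 ∧ ¬H.Adj b' c2 ∧ b' ≠ c2)} =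
        insert c1 (M1 \ insert c2 M2) := by
      ext b'
      simp only [Set.mem_setOf_eq, Set.mem_insert_iff, Set.mem_diff, Set.mem_insert_iff]
      tauto
    have hI : M1 ∩ insert c2 M2 = insert c2 (M1 ∩ M2) := by
      ext b'
      simp only [Set.mem_inter_iff, Set.mem_insert_iff, Set.mem_setOf_eq]
      constructor
      · rintro ⟨h1, h2 | h2⟩
        · exact Or.inl h2
        · exact Or.inr ⟨h1, h2⟩
      · rintro (rfl | ⟨h1, h2⟩)
        · exact ⟨hc.symm, Or.inl rfl⟩
        · exact ⟨h1, Or.inr h2⟩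
    have hdiff : M1 \ insert c2 M2 = M1 \ (M1 ∩ insert c2 M2) := by
      rw [Set.diff_self_inter]
    have h1 : (M1 \ insert c2 M2).ncard = M1.ncard - (M1 ∩ insert c2 M2).ncard := by
      rw [hdiff, Set.ncard_diff Set.inter_subset_left (Set.toFinite _)]
    have h2 : (M1 ∩ insert c2 M2).ncard = (M1 ∩ M2).ncard + 1 := by
      rw [hI, Set.ncard_insert_of_notMem (fun h => H.irrefl h.2) (Set.toFinite _)]
    have hnm : c1 ∉ M1 \ insert c2 M2 := fun h => H.irrefl h.1
    rw [hU, Set.ncard_insert_of_notMem hnm (Set.toFinite _), h1, h2]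
  rw [key b1 b2 hadj, key b2 b1 hadj.symm]
  rw [← hN1, ← hN2, Set.inter_comm N2 N1, hN1card, hN2card, hdeg]

lemma no_H_edge [Nonempty α] (hlam : 1 < lam)
    (hq : QuasiDB (corona (⊥ : SimpleGraph α) H) lam)
    {b1 b2 : β} (hadj : H.Adj b1 b2) : False := by
  classical
  obtain ⟨a⟩ := ‹Nonempty α›
  have h1 := lam_eq_star hlam hq a b1
  have h2 := lam_eq_star hlam hq a b2
  have hc1 := star_count_bot (H := H) a b1
  have hc2 := star_count_bot (H := H) a b2
  have hm : (wSet (corona (⊥ : SimpleGraph α) H) (.inl a) (.inr (a,b1))).ncard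
      = (wSet (corona (⊥ : SimpleGraph α) H) (.inl a) (.inr (a,b2))).ncard := by
    exact_mod_cast h1.symm.trans h2
  have hdeg : (H.neighborSet b1).ncard = (H.neighborSet b2).ncard := by omega
  have hinj : Function.Injective (fun b' => (Sum.inr (a, b') : α ⊕ α × β)) := by
    intro x y h; simpa using h
  have hW1 : (wSet (corona (⊥ : SimpleGraph α) H) (.inr (a,b1)) (.inr (a,b2))).ncard
      = {b' | b' = b1 ∨ (H.Adj b' b1 ∧ ¬H.Adj b' b2 ∧ b' ≠ b2)}.ncard := by
    rw [wSet_H_edge a hadj, Set.ncard_image_of_injective _ hinj]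
  have hW2 : (wSet (corona (⊥ : SimpleGraph α) H) (.inr (a,b2)) (.inr (a,b1))).ncard
      = {b' | b' = b2 ∨ (H.Adj b' b2 ∧ ¬H.Adj b' b1 ∧ b' ≠ b1)}.ncard := by
    rw [wSet_H_edge a hadj.symm, Set.ncard_image_of_injective _ hinj]
  have hTeq := ncard_T_eq hadj hdeg
  have hpos : 0 < {b' | b' = b1 ∨ (H.Adj b' b1 ∧ ¬H.Adj b' b2 ∧ b' ≠ b2)}.ncard := by
    refine (Set.ncard_pos (Set.toFinite _)).2 ⟨b1, Or.inl rfl⟩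
  have hadjC : (corona (⊥ : SimpleGraph α) H).Adj (.inr (a,b1)) (.inr (a,b2)) := ⟨rfl, hadj⟩
  rcases hq _ _ hadjC with h | h <;>
  · rw [hW1, hW2, hTeq] at h
    have hn : (0:ℚ) < ({b' | b' = b2 ∨ (H.Adj b' b2 ∧ ¬H.Adj b' b1 ∧ b' ≠ b1)}.ncard : ℚ) := by
      exact_mod_cast hTeq ▸ hpos
    nlinarith

end CoronaAux


/-- The corona product of two nontrivial graphs is quasi-`lam`-distance-balanced
iff both graphs are empty, in which case `lam = |V(H)|`. -/
theorem stmt9 {α β : Type*} [Fintype α] [Fintype β] [Nontrivial α] [Nontrivial β]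
    (G : SimpleGraph α) (H : SimpleGraph β) (lam : ℚ) :
    (1 < lam ∧ QuasiDB (corona G H) lam) ↔
      (G = ⊥ ∧ H = ⊥ ∧ lam = (Fintype.card β : ℚ)) := by
  classical
  have hns : ∀ b : β, (⊥ : SimpleGraph β).neighborSet b = ∅ := by
    intro b; ext b'; simp [SimpleGraph.mem_neighborSet]
  constructor
  · rintro ⟨hlam, hq⟩
    have hG : G = ⊥ := by
      by_contra hne
      have hex : ∃ a1 a2, G.Adj a1 a2 := by
        by_contra hno
        push_neg at hno
        exact hne (by ext a c; simp [hno a c])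
      obtain ⟨a1, a2, ha⟩ := hex
      exact CoronaAux.no_G_edge hlam hq ha
    subst hG
    have hH : H = ⊥ := by
      by_contra hne
      have hex : ∃ b1 b2, H.Adj b1 b2 := by
        by_contra hno
        push_neg at hno
        exact hne (by ext b c; simp [hno b c])
      obtain ⟨b1, b2, hb⟩ := hex
      exact CoronaAux.no_H_edge hlam hq hb
    subst hH
    refine ⟨rfl, rfl, ?_⟩
    obtain ⟨a⟩ := (inferInstance : Nonempty α)
    obtain ⟨b⟩ := (inferInstance : Nonempty β)
    have h1 := CoronaAux.lam_eq_star hlam hq a b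
    have h2 := CoronaAux.star_count_bot (H := (⊥ : SimpleGraph β)) a b
    rw [hns b, Set.ncard_empty] at h2
    rw [h1, show (wSet (corona (⊥ : SimpleGraph α) (⊥ : SimpleGraph β)) (.inl a)
      (.inr (a,b))).ncard = Fintype.card β from by omega]
  · rintro ⟨rfl, rfl, rfl⟩
    have hk : 1 < Fintype.card β := Fintype.one_lt_card
    refine ⟨by exact_mod_cast hk, ?_⟩
    intro u v hadj
    match u, v, hadj with
    | .inl a, .inl c, h => exact absurd h (by simp)
    | .inr p, .inr q, h => exact absurd h.2 (by simp)
    | .inl a, .inr p, h =>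
      obtain ⟨a', b⟩ := p
      obtain rfl : a = a' := h
      left
      have hcount := CoronaAux.star_count_bot (H := (⊥ : SimpleGraph β)) a b
      rw [hns b, Set.ncard_empty] at hcount
      rw [CoronaAux.wSet_inr_inl_eq, Set.ncard_singleton,
        show (wSet (corona (⊥ : SimpleGraph α) (⊥ : SimpleGraph β)) (.inl a)
          (.inr (a,b))).ncard = Fintype.card β from by omega]
      push_cast; ring
    | .inr p, .inl a, h =>
      obtain ⟨a', b⟩ := p
      obtain rfl : a = a' := h
      right
      have hcount := CoronaAux.star_count_bot (H := (⊥ : SimpleGraph β)) a b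
      rw [hns b, Set.ncard_empty] at hcount
      rw [CoronaAux.wSet_inr_inl_eq, Set.ncard_singleton,
        show (wSet (corona (⊥ : SimpleGraph α) (⊥ : SimpleGraph β)) (.inl a)
          (.inr (a,b))).ncard = Fintype.card β from by omega]
      push_cast; ring
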